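/- Fix integers k ≥ U ≥ 1 and t ≥ 0. There exists a serialized single-chunk dissemination schedule (V, par, rank, rec) such that |{v ∈ V : rec v ≤ t}| = ∑_{j=1}^{U} S_k(t−j+1); that is, the upper bound ∑_{j=1}^{U} S_k(t−j+1) on the stream diffusion metric is attained. -/

import Mathlib

/-- Value of the k-step Fibonacci sequence at natural indices. -/
def FkNat (k : ℕ) : ℕ → ℕ
  | 0 => 0
  | 1 => 1
  | n + 2 => ∑ j ∈ Finset.range k, FkNat k (n + 1 - j)
decreasing_by omega

/-- The k-step Fibonacci sequence `F_k : ℤ → ℕ`: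
`F_k i = 0` for `i ≤ 0`, `F_k 1 = 1`, and `F_k i = ∑_{j=1}^{k} F_k (i - j)` for `i > 1`. -/
def Fk (k : ℕ) (i : ℤ) : ℕ := if i ≤ 0 then 0 else FkNat k i.toNat

/-- The k-step Fibonacci sum `S_k n = ∑_{i=1}^{n} F_k i` (zero for `n ≤ 0`). -/
noncomputable def Sk (k : ℕ) (n : ℤ) : ℕ := ∑ i ∈ Finset.Icc (1 : ℤ) n, Fk k i

/-- Compositions of `m` with parts in `[1, k]`. -/
def comps (k : ℕ) : ℕ → Finset (List ℕ)
  | 0 => {([] : List ℕ)}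
  | (m+1) => (Finset.Icc 1 (min k (m+1))).attach.biUnion fun r =>
      (comps k (m + 1 - r.1)).image (fun l => r.1 :: l)
decreasing_by
  have h := (Finset.mem_Icc.mp r.2).1
  omega

lemma mem_comps (k : ℕ) : ∀ (m : ℕ) (l : List ℕ),
    l ∈ comps k m ↔ (∀ x ∈ l, 1 ≤ x ∧ x ≤ k) ∧ l.sum = m := by
  intro m
  induction m using Nat.strong_induction_on with
  | _ m ih =>
    match m with
    | 0 =>
      intro l
      simp only [comps, Finset.mem_singleton]
      constructor
      · rintro rfl; simp
      · rintro ⟨h1, h2⟩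
        cases l with
        | nil => rfl
        | cons a l =>
          have := (h1 a (by simp)).1
          simp only [List.sum_cons] at h2; omega
    | (m+1) =>
      intro l
      rw [comps]
      simp only [Finset.mem_biUnion, Finset.mem_attach, Finset.mem_image, true_and]
      constructor
      · rintro ⟨⟨r, hr⟩, l', hl', rfl⟩
        have hr' := Finset.mem_Icc.mp hr
        have hrk : r ≤ k := le_trans hr'.2 (min_le_left _ _)
        have hrm1 : r ≤ m + 1 := le_trans hr'.2 (min_le_right _ _)
        have hl2 : l' ∈ comps k (m + 1 - r) := hl'
        rw [ih (m + 1 - r) (by omega)] at hl2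
        obtain ⟨hmem, hsum⟩ := hl2
        refine ⟨?_, ?_⟩
        · intro x hx
          rcases List.mem_cons.mp hx with rfl | hx
          · exact ⟨hr'.1, le_trans hr'.2 (min_le_left _ _)⟩
          · exact hmem x hx
        · simp only [List.sum_cons, hsum]; omega
      · rintro ⟨hmem, hsum⟩
        cases l with
        | nil => simp at hsum
        | cons r l' =>
          have hr := hmem r (by simp)
          have hsum' : r + l'.sum = m+1 := by simpa using hsum
          have hrm : r ∈ Finset.Icc 1 (min k (m+1)) := Finset.mem_Icc.mpr ⟨hr.1, by omega⟩
          refine ⟨⟨r, hrm⟩, l', ?_, rfl⟩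
          show l' ∈ comps k (m + 1 - r)
          rw [ih (m + 1 - r) (by omega)]
          exact ⟨fun x hx => hmem x (List.mem_cons_of_mem _ hx), by omega⟩

lemma card_comps (k : ℕ) : ∀ m, (comps k m).card = FkNat k (m+1) := by
  intro m
  induction m using Nat.strong_induction_on with
  | _ m ih =>
    match m with
    | 0 => simp [comps, FkNat]
    | (m+1) =>
      rw [comps, Finset.card_biUnion]
      · have h1 : ∀ r : {x // x ∈ Finset.Icc 1 (min k (m+1))},
            ((comps k (m + 1 - r.1)).image (fun l => r.1 :: l)).card
              = FkNat k (m + 2 - r.1) := by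
          rintro ⟨r, hr⟩
          have hr' := Finset.mem_Icc.mp hr
          have hrk : r ≤ k := le_trans hr'.2 (min_le_left _ _)
          have hrm1 : r ≤ m + 1 := le_trans hr'.2 (min_le_right _ _)
          show ((comps k (m + 1 - r)).image (fun l => r :: l)).card = FkNat k (m + 2 - r)
          rw [Finset.card_image_of_injective _ (fun a b h => by simpa using h),
            ih (m + 1 - r) (by omega)]
          congr 1; omega
        rw [Finset.sum_congr rfl (fun r _ => h1 r), Finset.sum_attach _ (fun r => FkNat k (m+2-r))]
        show _ = FkNat k (m+1+1)
        rw [FkNat]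
        rw [← Finset.Ico_add_one_right_eq_Icc, Finset.sum_Ico_eq_sum_range]
        have : ∀ j ∈ Finset.range k, FkNat k (m + 1 - j)
            = if j < min k (m+1) then FkNat k (m + 2 - (1 + j)) else 0 := by
          intro j hj
          simp only [Finset.mem_range] at hj
          by_cases h : j < min k (m+1)
          · simp only [h, if_true]; congr 1; omega
          · simp only [h, if_false]
            have : m + 1 - j = 0 := by omega
            rw [this, FkNat]
        clear this
        have hsub : Finset.range (min k (m+1)) ⊆ Finset.range k :=
          Finset.range_subset_range.mpr (min_le_left _ _)
        rw [← Finset.sum_subset hsub (by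
          intro j hj hj'
          simp only [Finset.mem_range] at hj hj'
          have : m + 1 - j = 0 := by omega
          rw [this, FkNat])]
        have : min k (m+1) + 1 - 1 = min k (m+1) := by omega
        rw [this]
        exact Finset.sum_congr rfl (fun i _ => by congr 1; omega)
      · rintro ⟨r, hr⟩ - ⟨s, hs⟩ - hne
        simp only [Finset.disjoint_left, Finset.mem_image]
        rintro l ⟨l1, -, rfl⟩ ⟨l2, -, h2⟩
        exact hne (Subtype.ext (List.cons_eq_cons.mp h2).1.symm)

/-- Lists over `[1,k]` with sum at most `m`. -/
def Lset (k m : ℕ) : Finset (List ℕ) := (Finset.range (m+1)).biUnion (comps k)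

lemma mem_Lset (k m : ℕ) (l : List ℕ) :
    l ∈ Lset k m ↔ (∀ x ∈ l, 1 ≤ x ∧ x ≤ k) ∧ l.sum ≤ m := by
  simp only [Lset, Finset.mem_biUnion, Finset.mem_range]
  constructor
  · rintro ⟨s, hs, hl⟩
    rw [mem_comps] at hl
    exact ⟨hl.1, by omega⟩
  · rintro ⟨h1, h2⟩
    exact ⟨l.sum, by omega, (mem_comps k l.sum l).mpr ⟨h1, rfl⟩⟩

lemma card_Lset (k m : ℕ) :
    (Lset k m).card = ∑ s ∈ Finset.range (m+1), FkNat k (s+1) := by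
  rw [Lset, Finset.card_biUnion]
  · exact Finset.sum_congr rfl fun s _ => card_comps k s
  · intro s _ s' _ hne
    simp only [Finset.disjoint_left]
    intro l hl hl'
    rw [mem_comps] at hl hl'
    exact hne (hl.2 ▸ hl'.2)

lemma Sk_natCast (k N : ℕ) :
    Sk k (N : ℤ) = ∑ s ∈ Finset.range N, FkNat k (s+1) := by
  induction N with
  | zero =>
    simp [Sk, Finset.Icc_eq_empty (by norm_num : ¬ (1:ℤ) ≤ 0)]
  | succ N ihN =>
    have hins : Finset.Icc (1:ℤ) ((N:ℤ)+1) = insert ((N:ℤ)+1) (Finset.Icc (1:ℤ) (N:ℤ)) := by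
      ext x; simp; omega
    have hnotmem : ((N:ℤ)+1) ∉ Finset.Icc (1:ℤ) (N:ℤ) := by simp
    rw [Sk, Nat.cast_succ, hins, Finset.sum_insert hnotmem, Finset.sum_range_succ, ← Sk, ihN]
    have : Fk k ((N:ℤ)+1) = FkNat k (N+1) := by
      rw [Fk, if_neg (by omega)]
      norm_num
    rw [this]
    exact Nat.add_comm _ _

lemma Sk_nonpos (k : ℕ) (n : ℤ) (hn : n ≤ 0) : Sk k n = 0 := by
  rw [Sk, Finset.Icc_eq_empty (by omega), Finset.sum_empty]

/-- The finite set of peers: pairs `(j, l)` where `j ∈ [1, min U t]` is the source rank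
and `l` records (in reverse) the ranks along the path from the source. -/
def Vfin (k U t : ℕ) : Finset (ℕ × List ℕ) :=
  (Finset.Icc 1 (min U t)).biUnion fun j => (Lset k (t - j)).image (fun l => (j, l))

lemma mem_Vfin (k U t : ℕ) (j : ℕ) (l : List ℕ) :
    (j, l) ∈ Vfin k U t ↔
      1 ≤ j ∧ j ≤ U ∧ (∀ x ∈ l, 1 ≤ x ∧ x ≤ k) ∧ j + l.sum ≤ t := by
  simp only [Vfin, Finset.mem_biUnion, Finset.mem_Icc, Finset.mem_image, Prod.mk.injEq]
  constructor
  · rintro ⟨j', ⟨hj1, hj2⟩, l', hl', rfl, rfl⟩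
    rw [mem_Lset] at hl'
    exact ⟨hj1, le_trans hj2 (min_le_left _ _), hl'.1,
      by have := le_trans hj2 (min_le_right _ _); omega⟩
  · rintro ⟨h1, h2, h3, h4⟩
    exact ⟨j, ⟨h1, le_min h2 (by omega)⟩, l,
      (mem_Lset k (t - j) l).mpr ⟨h3, by omega⟩, rfl, rfl⟩

lemma tail_mem_Vfin (k U t : ℕ) {j : ℕ} {l : List ℕ} (h : (j, l) ∈ Vfin k U t) :
    (j, l.tail) ∈ Vfin k U t := by
  rw [mem_Vfin] at h ⊢
  obtain ⟨h1, h2, h3, h4⟩ := h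
  refine ⟨h1, h2, fun x hx => h3 x (List.mem_of_mem_tail hx), ?_⟩
  have : l.tail.sum ≤ l.sum := by
    cases l with
    | nil => simp
    | cons a l => simp
  omega

def parFn (k U t : ℕ) (v : {x : ℕ × List ℕ // x ∈ Vfin k U t}) :
    Option {x : ℕ × List ℕ // x ∈ Vfin k U t} :=
  if h : v.1.2 = [] then none
  else some ⟨(v.1.1, v.1.2.tail), tail_mem_Vfin k U t v.2⟩


/-- The upper bound `∑_{j=1}^{U} S_k (t - j + 1)` on the stream diffusion metric is
attained: there exists a serialized single-chunk dissemination schedule in which exactly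
that many peers complete reception of the chunk within `t` time units. -/
theorem stream_diffusion_bound_attained
    (k U : ℕ) (hU : 1 ≤ U) (hUk : U ≤ k) (t : ℕ) :
    ∃ (V : Type) (_ : Fintype V) (_ : DecidableEq V)
      (par : V → Option V) (rank rec : V → ℕ),
      (∀ v, 1 ≤ rank v) ∧
      (∀ v w, v ≠ w → par v = par w → rank v ≠ rank w) ∧
      (∀ v, par v = none → rank v ≤ U) ∧
      (∀ v p, par v = some p → rank v ≤ k) ∧
      (∀ v, par v = none → rank v ≤ rec v) ∧
      (∀ v p, par v = some p → rec p + rank v ≤ rec v) ∧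
      (Finset.univ.filter fun v => rec v ≤ t).card =
        ∑ j ∈ Finset.Icc 1 U, Sk k ((t : ℤ) - (j : ℤ) + 1) := by
  classical
  refine ⟨{x : ℕ × List ℕ // x ∈ Vfin k U t}, inferInstance, inferInstance,
    parFn k U t,
    (fun v => if v.1.2 = [] then v.1.1 else v.1.2.headI),
    (fun v => v.1.1 + v.1.2.sum),
    ?_, ?_, ?_, ?_, ?_, ?_, ?_⟩
  · -- rank ≥ 1
    rintro ⟨⟨j, l⟩, hv⟩
    rw [mem_Vfin] at hv
    by_cases h : l = []
    · simpa [h] using hv.1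
    · obtain ⟨a, l', rfl⟩ := List.exists_cons_of_ne_nil h
      simpa using (hv.2.2.1 a (by simp)).1
  · -- ranks distinct for same parent
    rintro ⟨⟨j, l⟩, hv⟩ ⟨⟨j', l'⟩, hw⟩ hne hpar
    simp only [parFn] at hpar
    by_cases h : l = [] <;> by_cases h' : l' = []
    · subst h; subst h'
      intro hjj
      simp at hjj
      exact hne (Subtype.ext (by simp [hjj]))
    · rw [dif_pos h, dif_neg h'] at hpar
      exact absurd hpar (by simp)
    · rw [dif_neg h, dif_pos h'] at hpar
      exact absurd hpar (by simp)
    · obtain ⟨a, l1, rfl⟩ := List.exists_cons_of_ne_nil h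
      obtain ⟨b, l2, rfl⟩ := List.exists_cons_of_ne_nil h'
      rw [dif_neg h, dif_neg h'] at hpar
      have hpar' := Option.some.inj hpar
      have hj : j = j' := congrArg (fun x => x.1.1) hpar'
      have hl : l1 = l2 := by
        have := congrArg (fun x => x.1.2) hpar'
        simpa using this
      simp only [if_neg h, if_neg h', List.headI_cons]
      intro hab
      exact hne (Subtype.ext (by simp [hj, hl, hab]))
  · -- root rank ≤ U
    rintro ⟨⟨j, l⟩, hv⟩ hp
    simp only [parFn] at hp
    by_cases h : l = []
    · rw [mem_Vfin] at hv
      simpa [h] using hv.2.1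
    · rw [dif_neg h] at hp
      exact absurd hp (by simp)
  · -- non-root rank ≤ k
    rintro ⟨⟨j, l⟩, hv⟩ p hp
    simp only [parFn] at hp
    by_cases h : l = []
    · rw [dif_pos h] at hp
      exact absurd hp (by simp)
    · rw [mem_Vfin] at hv
      obtain ⟨a, l1, rfl⟩ := List.exists_cons_of_ne_nil h
      simpa using (hv.2.2.1 a (by simp)).2
  · -- root: rank ≤ rec
    rintro ⟨⟨j, l⟩, hv⟩ hp
    simp only [parFn] at hp
    by_cases h : l = []
    · simp [h]
    · rw [dif_neg h] at hp
      exact absurd hp (by simp)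
  · -- child: rec p + rank ≤ rec
    rintro ⟨⟨j, l⟩, hv⟩ p hp
    simp only [parFn] at hp
    by_cases h : l = []
    · rw [dif_pos h] at hp
      exact absurd hp (by simp)
    · rw [dif_neg h] at hp
      obtain rfl := (Option.some.inj hp).symm
      obtain ⟨a, l1, rfl⟩ := List.exists_cons_of_ne_nil h
      simp only [List.tail_cons, List.headI_cons, List.sum_cons, if_neg h]
      omega
  · -- the count
    have hall : (Finset.univ.filter
        fun v : {x : ℕ × List ℕ // x ∈ Vfin k U t} => v.1.1 + v.1.2.sum ≤ t)
        = Finset.univ := by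
      rw [Finset.filter_eq_self]
      rintro ⟨⟨j, l⟩, hv⟩ -
      exact ((mem_Vfin k U t j l).mp hv).2.2.2
    rw [hall, Finset.card_univ, Fintype.card_coe]
    rw [Vfin, Finset.card_biUnion]
    · have hsub : Finset.Icc 1 (min U t) ⊆ Finset.Icc 1 U := by
        intro j hj
        simp only [Finset.mem_Icc] at hj ⊢
        omega
      rw [← Finset.sum_subset hsub (fun j hj hj' => by
        simp only [Finset.mem_Icc] at hj hj'
        exact Sk_nonpos k _ (by omega))]
      refine Finset.sum_congr rfl fun j hj => ?_
      simp only [Finset.mem_Icc] at hj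
      have hjt : j ≤ t := le_trans hj.2 (min_le_right _ _)
      rw [Finset.card_image_of_injective _ (fun a b hab => by simpa using hab),
        card_Lset]
      have hcast : (t : ℤ) - (j : ℤ) + 1 = ((t - j + 1 : ℕ) : ℤ) := by
        push_cast [hjt]
        omega
      rw [hcast, Sk_natCast]
    · intro j hj j' hj' hne
      simp only [Finset.disjoint_left, Finset.mem_image]
      rintro x ⟨l1, -, rfl⟩ ⟨l2, -, h2⟩
      exact hne (congrArg Prod.fst h2).symm
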